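/- arXiv:1312.1447 — 4 statements merged into one kernel-verified Lean document; each statement's English description precedes it below -/
import Mathlib

section
/- Let K, L, R ≥ 1 be natural numbers and let G be a (K*L) × (K*R) matrix over ZMod 2 that is block-circulant with row period L and column period R, i.e., for all i : Fin (K*L) and j : Fin (K*R), G (i + L) (j + R) = G i j, where i + L is taken modulo K*L and j + R modulo K*R. Then for every U : Fin (K*L) → ZMod 2 and every natural number k, the right cyclic shift by k*R positions of Matrix.vecMul U G equals Matrix.vecMul U_{(k*L)} G, where U_{(k*L)} is the right cyclic shift of U by k*L positions. In other words, for a tail-biting convolutional code of general rate L/R, the source packet corresponding to the k*R-bit right circular shift of a codeword is the k*L-bit right circular shift of the original source packet. -/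
/-- Right cyclic shift of `v` by `s` positions: `(shiftR s v) j = v (j - s)`, index mod `n`. -/
def shiftR {n : ℕ} (s : ℕ) (v : Fin n → ZMod 2) : Fin n → ZMod 2 :=
  fun j => v ⟨(j.val + (n - s % n)) % n, Nat.mod_lt _ j.pos⟩

/-- Left cyclic shift of `v` by `s` positions: `(shiftL s v) j = v (j + s)`, index mod `n`. -/
def shiftL {n : ℕ} (s : ℕ) (v : Fin n → ZMod 2) : Fin n → ZMod 2 :=
  fun j => v ⟨(j.val + s) % n, Nat.mod_lt _ j.pos⟩

lemma key_mod {n : ℕ} (s : ℕ) {i : ℕ} (hi : i < n) :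
    (i + s + (n - s % n)) % n = i := by
  have hn : 0 < n := lt_of_le_of_lt (Nat.zero_le _) hi
  have h1 : s % n < n := Nat.mod_lt _ hn
  have h2 : i + s + (n - s % n) = i + n * (s / n) + n := by
    have := Nat.div_add_mod s n
    omega
  rw [h2, Nat.add_mod_right, Nat.add_mul_mod_self_left, Nat.mod_eq_of_lt hi]

/-- Rotation by `s` as an equivalence of `Fin n`. -/
def rotEquiv (n s : ℕ) (hn : 0 < n) : Fin n ≃ Fin n where
  toFun i := ⟨(i.val + s) % n, Nat.mod_lt _ hn⟩
  invFun i := ⟨(i.val + (n - s % n)) % n, Nat.mod_lt _ hn⟩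
  left_inv i := by
    apply Fin.ext
    simp only [Nat.mod_add_mod]
    exact key_mod _ i.isLt
  right_inv i := by
    apply Fin.ext
    simp only [Nat.mod_add_mod]
    rw [show i.val + (n - s % n) + s = i.val + s + (n - s % n) by ring]
    exact key_mod _ i.isLt

@[simp] lemma rotEquiv_apply (n s : ℕ) (hn : 0 < n) (i : Fin n) :
    rotEquiv n s hn i = ⟨(i.val + s) % n, Nat.mod_lt _ hn⟩ := rfl

/-- For a tail-biting convolutional code of general rate L/R with block-circulant
generator matrix `G (i+L) (j+R) = G i j` (row index mod `K*L`, column index mod `K*R`),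
the source packet corresponding to the `k*R`-bit right circular shift of a codeword is
the `k*L`-bit right circular shift of the original source packet. -/
theorem stmt1 {K L R : ℕ} (hK : 1 ≤ K) (hL : 1 ≤ L) (hR : 1 ≤ R)
    (G : Matrix (Fin (K * L)) (Fin (K * R)) (ZMod 2))
    (hG : ∀ (i : Fin (K * L)) (j : Fin (K * R)),
      G ⟨(i.val + L) % (K * L), Nat.mod_lt _ i.pos⟩
        ⟨(j.val + R) % (K * R), Nat.mod_lt _ j.pos⟩ = G i j)
    (U : Fin (K * L) → ZMod 2) (k : ℕ) :
    shiftR (k * R) (Matrix.vecMul U G) = Matrix.vecMul (shiftR (k * L) U) G := by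
  have hKL : 0 < K * L := Nat.mul_pos hK hL
  have hKR : 0 < K * R := Nat.mul_pos hK hR
  have hGk : ∀ (c : ℕ) (i : Fin (K * L)) (j : Fin (K * R)),
      G ⟨(i.val + c * L) % (K * L), Nat.mod_lt _ hKL⟩
        ⟨(j.val + c * R) % (K * R), Nat.mod_lt _ hKR⟩ = G i j := by
    intro c
    induction c with
    | zero =>
      intro i j
      simp [Nat.mod_eq_of_lt i.isLt, Nat.mod_eq_of_lt j.isLt]
    | succ c ih =>
      intro i j
      have h := hG ⟨(i.val + c * L) % (K * L), Nat.mod_lt _ hKL⟩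
        ⟨(j.val + c * R) % (K * R), Nat.mod_lt _ hKR⟩
      rw [ih] at h
      rw [← h]
      congr 1 <;> apply Fin.ext <;> simp [Nat.mod_add_mod, Nat.succ_mul] <;> ring_nf
  funext j
  set j' : Fin (K * R) := ⟨(j.val + (K * R - (k * R) % (K * R))) % (K * R),
    Nat.mod_lt _ j.pos⟩ with hj'
  show Matrix.vecMul U G j' = _
  simp only [Matrix.vecMul, dotProduct]
  rw [← Equiv.sum_comp (rotEquiv (K * L) (k * L) hKL)
    (fun i => shiftR (k * L) U i * G i j)]
  refine Finset.sum_congr rfl fun i _ => ?_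
  have h1 : shiftR (k * L) U (rotEquiv (K * L) (k * L) hKL i) = U i := by
    show U _ = U i
    congr 1
    apply Fin.ext
    simp only [rotEquiv_apply, Nat.mod_add_mod]
    exact key_mod _ i.isLt
  have h2 : G (rotEquiv (K * L) (k * L) hKL i) j = G i j' := by
    have h := hGk k i j'
    convert h using 2
    · rfl
    apply Fin.ext
    simp only [Nat.mod_add_mod, hj']
    rw [show j.val + (K * R - (k * R) % (K * R)) + k * R
        = j.val + k * R + (K * R - (k * R) % (K * R)) by ring]
    exact (key_mod _ j.isLt).symm
  rw [h1, h2]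
end

section
/- Let K ≥ 1 and R ≥ 1, let g : Fin (K*R) → ZMod 2, and let G be the K × (K*R) circulant generator matrix over ZMod 2 with G i j = g(j - R*i mod K*R). Suppose the encoding map E : (Fin K → ZMod 2) → (Fin (K*R) → ZMod 2) given by E(U) = Matrix.vecMul U G is injective, and let D be any left inverse of E (a decoding function with D(E(U)) = U for all U). Then for every source packet U, every natural number k, and C = E(U), the decoder output on the k*R-bit right circular shift of C is the k-bit right circular shift of U: D(C_{(k*R)}) = U_{(k)}. That is, if the initial and terminal states of the convolutional encoder coincide (tail-biting), decoding the k*R-bit circularly shifted codeword yields the k-bit circularly shifted source packet. -/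
open Fin.NatCast

lemma shiftR_eq {n : ℕ} [NeZero n] (s : ℕ) (v : Fin n → ZMod 2) (j : Fin n) :
    shiftR s v j = v (j - (s : Fin n)) := by
  unfold shiftR
  congr 1
  apply Fin.ext
  simp [Fin.sub_def, Fin.val_natCast, Nat.add_comm]

/-- Tail-biting convolutional code: if the encoding map `E U = U · G` (with `G` the
circulant generator matrix `G i j = g (j - R*i)`) is injective and `D` is any left
inverse of `E`, then decoding the `k*R`-bit right circularly shifted codeword yields
the `k`-bit right circularly shifted source packet. -/
theorem stmt2 {K R : ℕ} (hK : 1 ≤ K) (hR : 1 ≤ R)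
    (g : Fin (K * R) → ZMod 2)
    (G : Matrix (Fin K) (Fin (K * R)) (ZMod 2))
    (hG : ∀ (i : Fin K) (j : Fin (K * R)), G i j = shiftR (R * i.val) g j)
    (E : (Fin K → ZMod 2) → (Fin (K * R) → ZMod 2))
    (hE : ∀ U, E U = Matrix.vecMul U G)
    (hEinj : Function.Injective E)
    (D : (Fin (K * R) → ZMod 2) → (Fin K → ZMod 2))
    (hD : ∀ U, D (E U) = U)
    (U : Fin K → ZMod 2) (k : ℕ) :
    D (shiftR (k * R) (E U)) = shiftR k U := by
  haveI : NeZero K := ⟨by omega⟩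
  haveI : NeZero (K * R) := ⟨Nat.mul_ne_zero (by omega) (by omega)⟩
  have key : shiftR (k * R) (E U) = E (shiftR k U) := by
    funext j
    rw [shiftR_eq]
    simp only [hE, Matrix.vecMul, dotProduct, hG, shiftR_eq]
    refine Fintype.sum_equiv (Equiv.addRight ((k : Fin K))) _ _ (fun i => ?_)
    simp only [Equiv.coe_addRight, add_sub_cancel_right]
    congr 1
    have hX : ((R * ((i + (k : Fin K)).val) : ℕ) : Fin (K * R))
        = ((k * R : ℕ) : Fin (K * R)) + ((R * i.val : ℕ) : Fin (K * R)) := by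
      have h1 : (i + (k : Fin K)).val = (i.val + k) % K := by
        simp [Fin.add_def, Fin.val_natCast, Nat.add_mod_mod]
      rw [h1]
      have h2 : R * (i.val + k) = R * ((i.val + k) % K) + (K * R) * ((i.val + k) / K) := by
        conv_lhs => rw [← Nat.mod_add_div (i.val + k) K]
        ring
      have h3 : ((R * (i.val + k) : ℕ) : Fin (K * R)) = ((R * ((i.val + k) % K) : ℕ) : Fin (K * R)) := by
        rw [h2, Fin.ext_iff, Fin.val_natCast, Fin.val_natCast, Nat.add_mul_mod_self_left]
      rw [← h3]
      rw [Fin.ext_iff, Fin.val_add, Fin.val_natCast, Fin.val_natCast, Fin.val_natCast,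
        ← Nat.add_mod, Nat.mul_comm k R, Nat.mul_add, Nat.add_comm]
    rw [hX, sub_add_eq_sub_sub]
  rw [key, hD]
end

section
/- Let 𝒞 : (Fin K → ZMod 2) →ₗ[ZMod 2] (Fin N → ZMod 2) be an injective linear encoding map whose range (the code) is cyclic, i.e., closed under right cyclic shift by one position, and let D : (Fin N → ZMod 2) →ₗ[ZMod 2] (Fin K → ZMod 2) be a linear decoding map satisfying D(𝒞(U)) = U for all U and 𝒞(D(c)) = c for every c in the range of 𝒞. Fix source packets U^A, U^B : Fin K → ZMod 2, a symbol misalignment τ : ℕ, and let the relay's network-coded packet be U^R = U^A + D((𝒞(U^B))_{(τ)}). Then both end nodes can recover each other's packet: (i) node A recovers U^B, since 𝒞(U^R + U^A) = (𝒞(U^B))_{(τ)}, the left cyclic shift by τ positions of 𝒞(U^R + U^A) equals 𝒞(U^B), and hence D applied to that left-shifted vector equals U^B; and (ii) node B recovers U^A, since D((𝒞(U^B))_{(τ)}) + U^R = U^A. -/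
open Fin.NatCast

lemma shiftL_eq {n : ℕ} [NeZero n] (s : ℕ) (v : Fin n → ZMod 2) (j : Fin n) :
    shiftL s v j = v (j + (s : Fin n)) := by
  unfold shiftL
  congr 1
  apply Fin.ext
  rw [Fin.add_def]
  simp [Fin.val_natCast, Nat.add_mod_mod]

lemma shiftL_shiftR {n : ℕ} [NeZero n] (s : ℕ) (v : Fin n → ZMod 2) :
    shiftL s (shiftR s v) = v := by
  funext j
  rw [shiftL_eq, shiftR_eq, add_sub_cancel_right]

lemma shiftR_succ {n : ℕ} [NeZero n] (s : ℕ) (v : Fin n → ZMod 2) :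
    shiftR (s + 1) v = shiftR 1 (shiftR s v) := by
  funext j
  rw [shiftR_eq, shiftR_eq, shiftR_eq]
  congr 1
  push_cast
  abel

/-- With a cyclic linear code (range of the injective linear encoder `𝒞` is closed
under right cyclic shift by one) and a linear decoder `D` (two-sided inverse on the
code), if the relay's network-coded packet is `U^R = U^A + D((𝒞 U^B)_{(τ)})`, then
both end nodes can recover each other's packet. -/
theorem stmt5 {K N : ℕ}
    (𝒞 : (Fin K → ZMod 2) →ₗ[ZMod 2] (Fin N → ZMod 2))
    (h𝒞inj : Function.Injective 𝒞)
    (hcyc : ∀ c : Fin N → ZMod 2, (∃ U, 𝒞 U = c) → ∃ U', 𝒞 U' = shiftR 1 c)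
    (D : (Fin N → ZMod 2) →ₗ[ZMod 2] (Fin K → ZMod 2))
    (hD : ∀ U, D (𝒞 U) = U)
    (hDright : ∀ c : Fin N → ZMod 2, (∃ U, 𝒞 U = c) → 𝒞 (D c) = c)
    (UA UB : Fin K → ZMod 2) (τ : ℕ)
    (UR : Fin K → ZMod 2) (hUR : UR = UA + D (shiftR τ (𝒞 UB))) :
    (𝒞 (UR + UA) = shiftR τ (𝒞 UB) ∧
      shiftL τ (𝒞 (UR + UA)) = 𝒞 UB ∧
      D (shiftL τ (𝒞 (UR + UA))) = UB) ∧
    D (shiftR τ (𝒞 UB)) + UR = UA := by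
  rcases Nat.eq_zero_or_pos N with hN | hN
  · -- degenerate case: codomain is trivial
    subst hN
    have hsub : Subsingleton (Fin 0 → ZMod 2) := by
      constructor; intro a b; funext i; exact absurd i.2 (by omega)
    have hsubK : Subsingleton (Fin K → ZMod 2) := h𝒞inj.subsingleton
    refine ⟨⟨Subsingleton.elim _ _, Subsingleton.elim _ _, Subsingleton.elim _ _⟩,
      Subsingleton.elim _ _⟩
  · have : NeZero N := ⟨by omega⟩
    have key : UR + UA = D (shiftR τ (𝒞 UB)) := by
      rw [hUR]
      funext i
      simp only [Pi.add_apply]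
      rw [add_comm (UA i), add_assoc, CharTwo.add_self_eq_zero, add_zero]
    -- the code is closed under repeated right shifts
    have hclosed : ∀ s : ℕ, ∃ U', 𝒞 U' = shiftR s (𝒞 UB) := by
      intro s
      induction s with
      | zero =>
        refine ⟨UB, ?_⟩
        funext j
        rw [shiftR_eq]
        simp
      | succ s ih =>
        obtain ⟨U', hU'⟩ := ih
        obtain ⟨U'', hU''⟩ := hcyc _ ⟨U', hU'⟩
        exact ⟨U'', by rw [hU'', ← shiftR_succ]⟩
    have h1 : 𝒞 (UR + UA) = shiftR τ (𝒞 UB) := by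
      rw [key]
      exact hDright _ (hclosed τ)
    have h2 : shiftL τ (𝒞 (UR + UA)) = 𝒞 UB := by
      rw [h1, shiftL_shiftR]
    have h3 : D (shiftL τ (𝒞 (UR + UA))) = UB := by rw [h2, hD]
    refine ⟨⟨h1, h2, h3⟩, ?_⟩
    rw [hUR]
    funext i
    simp only [Pi.add_apply]
    rw [← add_assoc, add_comm (D _ i), add_assoc, CharTwo.add_self_eq_zero, add_zero]
end

section
/- Let K ≥ 1 and R ≥ 1, let g : Fin (K*R) → ZMod 2, and let G be the K × (K*R) circulant generator matrix over ZMod 2 with G i j = g(j - R*i mod K*R), with encoding map E(U) = Matrix.vecMul U G. Then for all source packets U^A, U^B : Fin K → ZMod 2 and every integral symbol misalignment τ : ℕ, the XOR of node A's codeword with the τ*R-bit right circularly shifted version of node B's codeword is itself a valid codeword, and its source packet is U^A ⊕ U^B_{(τ)}: E(U^A) + (E(U^B))_{(τ*R)} = E(U^A + U^B_{(τ)}). Consequently, in the presence of integral symbol misalignment τ, the Jt-CNC decoder outputs the network-coded packet U^R = U^A ⊕ U^B_{(τ)}. -/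
open Fin.NatCast

lemma cast_key {K R : ℕ} [NeZero K] [NeZero (K * R)] (i : Fin K) (τ : ℕ) :
    ((R * ((i + (τ : Fin K)).val) : ℕ) : Fin (K * R)) =
      ((R * i.val : ℕ) : Fin (K * R)) + ((τ * R : ℕ) : Fin (K * R)) := by
  have h1 : ((R * ((i + (τ : Fin K)).val) : ℕ) : Fin (K * R))
      = ((R * (i.val + τ) : ℕ) : Fin (K * R)) := by
    apply Fin.ext
    simp only [Fin.val_natCast, Fin.add_def]
    have : (R * ((i.val + τ % K) % K)) ≡ R * (i.val + τ) [MOD R * K] := by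
      exact Nat.ModEq.mul_left' R (by simpa using (Nat.mod_modEq (i.val + τ) K))
    have h2 : (R * ((i.val + τ % K) % K)) ≡ R * (i.val + τ) [MOD K * R] := by
      rwa [mul_comm K R]
    simpa [Fin.add_def, Fin.val_natCast, Nat.ModEq] using h2
  rw [h1]
  apply Fin.ext
  simp [Fin.val_natCast, Fin.add_def, Nat.add_mod, Nat.mul_add, mul_comm]
/-- With integral symbol misalignment `τ`, the XOR of node A's codeword with the
`τ*R`-bit right circularly shifted version of node B's codeword is a valid codeword
of the tail-biting convolutional code, with source packet `U^A ⊕ U^B_{(τ)}`. -/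
theorem stmt6 {K R : ℕ} (hK : 1 ≤ K) (hR : 1 ≤ R)
    (g : Fin (K * R) → ZMod 2)
    (G : Matrix (Fin K) (Fin (K * R)) (ZMod 2))
    (hG : ∀ (i : Fin K) (j : Fin (K * R)), G i j = shiftR (R * i.val) g j)
    (E : (Fin K → ZMod 2) → (Fin (K * R) → ZMod 2))
    (hE : ∀ U, E U = Matrix.vecMul U G)
    (UA UB : Fin K → ZMod 2) (τ : ℕ) :
    E UA + shiftR (τ * R) (E UB) = E (UA + shiftR τ UB) := by
  have hK0 : NeZero K := ⟨by omega⟩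
  have hn : NeZero (K * R) := ⟨by positivity⟩
  funext j
  simp only [Pi.add_apply, hE]
  rw [shiftR_eq]
  simp only [Matrix.vecMul, dotProduct, Pi.add_apply, add_mul,
    Finset.sum_add_distrib]
  congr 1
  apply Fintype.sum_equiv (Equiv.addRight (τ : Fin K))
  intro i
  simp only [Equiv.coe_addRight]
  rw [shiftR_eq, add_sub_cancel_right]
  congr 1
  rw [hG, hG, shiftR_eq, shiftR_eq]
  congr 1
  rw [cast_key]
  rw [sub_sub, add_comm]
end
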